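/- arXiv:1805.04486 — 2 statements merged into one kernel-verified Lean document; each statement's English description precedes it below -/
import Mathlib

section
/- For natural numbers m ≤ n, the Stirling number of the second kind satisfies S(n,m) = C(n,m)·E[S_m^{n-m}], where S_m is the sum of m independent uniform random variables on [0,1]. -/
open MeasureTheory

/-- Stirling numbers of the second kind. -/
def stirlingSnd : ℕ → ℕ → ℕ
  | 0, 0 => 1
  | 0, _ + 1 => 0
  | _ + 1, 0 => 0
  | n + 1, k + 1 => (k + 1) * stirlingSnd n (k + 1) + stirlingSnd n k

lemma stirlingSnd_zero_left : ∀ m, stirlingSnd 0 m = if m = 0 then 1 else 0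
  | 0 => rfl
  | _ + 1 => rfl

lemma stirlingSnd_zero_right : ∀ n, stirlingSnd n 0 = if n = 0 then 1 else 0
  | 0 => rfl
  | _ + 1 => rfl

lemma stirlingSnd_one_right : ∀ n, stirlingSnd (n + 1) 1 = 1
  | 0 => rfl
  | n + 1 => by
    show 1 * stirlingSnd (n + 1) 1 + stirlingSnd (n + 1) 0 = 1
    rw [stirlingSnd_one_right n, stirlingSnd_zero_right]
    simp

lemma stirlingSnd_eq_zero_of_lt : ∀ {n m}, n < m → stirlingSnd n m = 0
  | 0, _ + 1, _ => rfl
  | n + 1, m + 1, h => by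
    show (m + 1) * stirlingSnd n (m + 1) + stirlingSnd n m = 0
    rw [stirlingSnd_eq_zero_of_lt (by omega), stirlingSnd_eq_zero_of_lt (by omega)]
    simp

lemma star : ∀ n m, ∑ j ∈ Finset.range (n + 1), n.choose j * stirlingSnd j m
    = stirlingSnd (n + 1) (m + 1)
  | 0, m => by
    cases m <;> simp [stirlingSnd, stirlingSnd_zero_left]
  | n + 1, m => by
    have h1 : ∑ x ∈ Finset.range (n + 1), n.choose (x + 1) * stirlingSnd (x + 1) m
        + n.choose 0 * stirlingSnd 0 m = stirlingSnd (n + 1) (m + 1) := by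
      rw [← star n m, Finset.sum_range_succ' (fun j => n.choose j * stirlingSnd j m),
        Finset.sum_range_succ]
      simp [Nat.choose_succ_self]
    rw [Finset.sum_range_succ']
    have hsplit : ∑ x ∈ Finset.range (n + 1), (n + 1).choose (x + 1) * stirlingSnd (x + 1) m
        = (∑ x ∈ Finset.range (n + 1), n.choose x * stirlingSnd (x + 1) m)
          + ∑ x ∈ Finset.range (n + 1), n.choose (x + 1) * stirlingSnd (x + 1) m := by
      rw [← Finset.sum_add_distrib]
      exact Finset.sum_congr rfl fun x _ => by rw [Nat.choose_succ_succ, add_mul]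
    have hc0 : (n + 1).choose 0 * stirlingSnd 0 m = n.choose 0 * stirlingSnd 0 m := by simp
    rw [hsplit, hc0, add_assoc, add_assoc, h1]
    cases m with
    | zero =>
        have hA : ∑ x ∈ Finset.range (n + 1), n.choose x * stirlingSnd (x + 1) 0 = 0 :=
          Finset.sum_eq_zero fun x _ => by rw [stirlingSnd_zero_right]; simp
        rw [hA, stirlingSnd_one_right]
        show 0 + 1 = stirlingSnd (n + 2) 1
        rw [stirlingSnd_one_right]
    | succ m' =>
        have hA : ∑ x ∈ Finset.range (n + 1), n.choose x * stirlingSnd (x + 1) (m' + 1)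
            = (m' + 1) * stirlingSnd (n + 1) (m' + 2) + stirlingSnd (n + 1) (m' + 1) := by
          have hrec : ∀ x : ℕ, n.choose x * stirlingSnd (x + 1) (m' + 1)
              = (m' + 1) * (n.choose x * stirlingSnd x (m' + 1))
                + n.choose x * stirlingSnd x m' := fun x => by
            show n.choose x * ((m' + 1) * stirlingSnd x (m' + 1) + stirlingSnd x m') = _
            ring
          rw [Finset.sum_congr rfl fun x _ => hrec x, Finset.sum_add_distrib,
            ← Finset.mul_sum, star n (m' + 1), star n m']
        rw [hA]
        show _ = stirlingSnd (n + 2) (m' + 2)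
        show _ = (m' + 2) * stirlingSnd (n + 1) (m' + 2) + stirlingSnd (n + 1) (m' + 1)
        ring

lemma diamond (m k : ℕ) :
    ∑ p ∈ Finset.HasAntidiagonal.antidiagonal k, (m + k + 1).choose (p.1 + 1) * stirlingSnd (m + p.2) m
      = (m + 1) * stirlingSnd (m + k + 1) (m + 1) := by
  rw [Finset.Nat.sum_antidiagonal_eq_sum_range_succ_mk, ← Finset.sum_range_reflect]
  have h1 : ∀ j ∈ Finset.range (k + 1),
      (m + k + 1).choose (k + 1 - 1 - j + 1) * stirlingSnd (m + (k - (k + 1 - 1 - j))) m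
        = (m + k + 1).choose (m + j) * stirlingSnd (m + j) m := by
    intro j hj
    rw [Finset.mem_range] at hj
    have h2 : k + 1 - 1 - j = k - j := by omega
    have h3 : k - (k - j) = j := by omega
    have h4 : (m + k + 1).choose (k - j + 1) = (m + k + 1).choose (m + j) := by
      have : m + j = m + k + 1 - (k - j + 1) := by omega
      rw [this, Nat.choose_symm (by omega)]
    rw [h2, h3, h4]
  rw [Finset.sum_congr rfl h1]
  have hstar := star (m + k + 1) m
  rw [show m + k + 1 + 1 = m + (k + 2) by ring, Finset.sum_range_add,
    Finset.sum_range_succ] at hstar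
  have hz : ∑ j ∈ Finset.range m, (m + k + 1).choose j * stirlingSnd j m = 0 :=
    Finset.sum_eq_zero fun j hj => by
      rw [stirlingSnd_eq_zero_of_lt (Finset.mem_range.1 hj)]; simp
  rw [hz, zero_add, show m + (k + 1) = m + k + 1 by ring, Nat.choose_self, one_mul] at hstar
  have hrec : stirlingSnd (m + k + 1 + 1) (m + 1) =
      (m + 1) * stirlingSnd (m + k + 1) (m + 1) + stirlingSnd (m + k + 1) m := rfl
  rw [show m + (k + 2) = m + k + 1 + 1 by ring, hrec] at hstar
  have hfix : ∀ j ∈ Finset.range (k + 1),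
      (m + k + 1).choose (m + j) * stirlingSnd (m + j) m
        = (m + k + 1).choose (m + j) * stirlingSnd (m + j) m := fun _ _ => rfl
  omega

lemma keyT {ι : Type*} [DecidableEq ι] (s : Finset ι) : ∀ k : ℕ,
    ((s.card + k).factorial : ℝ) * ∑ c ∈ s.piAntidiag k, ∏ i ∈ s, ((1 : ℝ) / (c i + 1).factorial)
      = (s.card.factorial : ℝ) * stirlingSnd (s.card + k) s.card := by
  induction s using Finset.cons_induction with
  | empty =>
      intro k
      rcases Nat.eq_zero_or_pos k with hk | hk
      · subst hk; simp [stirlingSnd]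
      · rw [Finset.piAntidiag_empty_of_ne_zero (by omega)]
        simp [stirlingSnd_zero_right, Nat.pos_iff_ne_zero.mp hk]
  | cons i s hi ih =>
      intro k
      have hsplit : ∑ c ∈ (Finset.cons i s hi).piAntidiag k,
          ∏ j ∈ Finset.cons i s hi, ((1 : ℝ) / (c j + 1).factorial)
          = ∑ p ∈ Finset.HasAntidiagonal.antidiagonal k, (1 : ℝ) / (p.1 + 1).factorial *
              ∑ c ∈ s.piAntidiag p.2, ∏ j ∈ s, ((1 : ℝ) / (c j + 1).factorial) := by
        rw [Finset.piAntidiag_cons hi, Finset.sum_disjiUnion]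
        refine Finset.sum_congr rfl fun p hp => ?_
        rw [Finset.sum_map, Finset.mul_sum]
        refine Finset.sum_congr rfl fun c hc => ?_
        obtain ⟨hcsum, hcsupp⟩ := Finset.mem_piAntidiag.mp hc
        have hci : c i = 0 := by
          by_contra h; exact hi (hcsupp i h)
        rw [Finset.prod_cons]
        congr 1
        · simp [addRightEmbedding_apply, hci]
        · refine Finset.prod_congr rfl fun j hj => ?_
          have : j ≠ i := ne_of_mem_of_not_mem hj hi
          simp [addRightEmbedding_apply, this]
      rw [hsplit, Finset.card_cons hi, Finset.mul_sum]
      have hterm : ∀ p ∈ Finset.HasAntidiagonal.antidiagonal k,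
          ((s.card + 1 + k).factorial : ℝ) * ((1 : ℝ) / (p.1 + 1).factorial *
              ∑ c ∈ s.piAntidiag p.2, ∏ j ∈ s, ((1 : ℝ) / (c j + 1).factorial))
            = ((s.card + k + 1).choose (p.1 + 1) * stirlingSnd (s.card + p.2) s.card : ℕ)
                * (s.card.factorial : ℝ) := by
        intro p hp
        have hab : p.1 + p.2 = k := Finset.HasAntidiagonal.mem_antidiagonal.mp hp
        have h1 := ih p.2
        have h3 : (s.card + k + 1).choose (p.1 + 1) * (p.1 + 1).factorial
            * (s.card + p.2).factorial = (s.card + 1 + k).factorial := by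
          rw [show s.card + p.2 = s.card + k + 1 - (p.1 + 1) by omega,
            Nat.choose_mul_factorial_mul_factorial (by omega),
            show s.card + 1 + k = s.card + k + 1 by ring]
        have h2 : ((s.card + 1 + k).factorial : ℝ)
            = ((s.card + k + 1).choose (p.1 + 1) : ℝ) * ((p.1 + 1).factorial : ℝ)
              * ((s.card + p.2).factorial : ℝ) := by
          rw [← h3]; push_cast; ring
        have hne : ((p.1 + 1).factorial : ℝ) ≠ 0 := Nat.cast_ne_zero.mpr (Nat.factorial_ne_zero _)
        calc ((s.card + 1 + k).factorial : ℝ) * ((1 : ℝ) / (p.1 + 1).factorial *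
              ∑ c ∈ s.piAntidiag p.2, ∏ j ∈ s, ((1 : ℝ) / (c j + 1).factorial))
            = ((s.card + k + 1).choose (p.1 + 1) : ℝ)
              * (((p.1 + 1).factorial : ℝ) * ((1 : ℝ) / (p.1 + 1).factorial))
              * (((s.card + p.2).factorial : ℝ)
                * ∑ c ∈ s.piAntidiag p.2, ∏ j ∈ s, ((1 : ℝ) / (c j + 1).factorial)) := by
              rw [h2]; ring
          _ = ((s.card + k + 1).choose (p.1 + 1) : ℝ)
              * ((s.card.factorial : ℝ) * stirlingSnd (s.card + p.2) s.card) := by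
              rw [mul_one_div_cancel hne, h1]; ring
          _ = _ := by push_cast; ring
      rw [Finset.sum_congr rfl hterm, ← Finset.sum_mul, ← Nat.cast_sum, diamond s.card k,
        show s.card + 1 + k = s.card + k + 1 by ring, Nat.factorial_succ]
      push_cast
      ring


open MeasureTheory

theorem stirlingSnd_eq_choose_mul_moment
    {Ω : Type*} [MeasurableSpace Ω] (μ : Measure Ω) [IsProbabilityMeasure μ]
    (m n : ℕ) (hmn : m ≤ n) (U : Fin m → Ω → ℝ) (hmeas : ∀ i, Measurable (U i))
    (hindep : ProbabilityTheory.iIndepFun U μ)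
    (hunif : ∀ i, Measure.map (U i) μ = volume.restrict (Set.Icc (0:ℝ) 1)) :
    (stirlingSnd n m : ℝ) = (n.choose m : ℝ) * ∫ ω, (∑ i, U i ω) ^ (n - m) ∂μ := by
  set k := n - m with hk
  have hnk : n = m + k := by omega
  -- a.e. bounds
  have hae : ∀ i, ∀ᵐ ω ∂μ, U i ω ∈ Set.Icc (0:ℝ) 1 := by
    intro i
    have hm1 : μ (U i ⁻¹' Set.Icc 0 1) = 1 := by
      rw [← Measure.map_apply (hmeas i) measurableSet_Icc, hunif i]
      simp [Real.volume_Icc]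
    have hcompl : μ (U i ⁻¹' Set.Icc 0 1)ᶜ = 0 := by
      rw [measure_compl ((hmeas i) measurableSet_Icc) (measure_ne_top _ _), hm1]
      simp
    exact MeasureTheory.ae_iff.2 hcompl
  have haeAll : ∀ᵐ ω ∂μ, ∀ i, U i ω ∈ Set.Icc (0:ℝ) 1 := MeasureTheory.ae_all_iff.2 hae
  -- moments of a single uniform
  have hmom : ∀ (i : Fin m) (c : ℕ), ∫ ω, (U i ω) ^ c ∂μ = 1 / ((c : ℝ) + 1) := by
    intro i c
    have h1 : ∫ ω, (U i ω) ^ c ∂μ = ∫ x, x ^ c ∂(Measure.map (U i) μ) :=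
      (integral_map (hmeas i).aemeasurable
        ((measurable_id.pow_const c).aestronglyMeasurable)).symm
    rw [h1, hunif i,
      show ∫ x, x ^ c ∂(volume.restrict (Set.Icc (0:ℝ) 1))
        = ∫ x in Set.Icc (0:ℝ) 1, x ^ c from rfl,
      MeasureTheory.integral_Icc_eq_integral_Ioc, ← intervalIntegral.integral_of_le zero_le_one,
      integral_pow]
    simp
  -- product of independent moments
  have hprod : ∀ (c : Fin m → ℕ) (t : Finset (Fin m)),
      ∫ ω, ∏ i ∈ t, (U i ω) ^ c i ∂μ = ∏ i ∈ t, ∫ ω, (U i ω) ^ c i ∂μ := by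
    intro c t
    have hV : ProbabilityTheory.iIndepFun
        (fun i => fun ω => (U i ω) ^ c i) μ :=
      hindep.comp (fun i => fun x => x ^ c i) (fun i => measurable_id.pow_const (c i))
    induction t using Finset.cons_induction with
    | empty => simp
    | cons j t hj iht =>
        have hpm : ∀ i : Fin m, Measurable fun ω => (U i ω) ^ c i :=
          fun i => (hmeas i).pow_const (c i)
        have hip : ProbabilityTheory.IndepFun
            (∏ a ∈ t, fun ω => (U a ω) ^ c a) (fun ω => (U j ω) ^ c j) μ :=
          hV.indepFun_finsetProd_of_notMem hpm hj
        have heq : (fun ω => ∏ i ∈ Finset.cons j t hj, (U i ω) ^ c i)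
            = (∏ i ∈ t, fun ω => (U i ω) ^ c i) * fun ω => (U j ω) ^ c j := by
          funext ω
          simp only [Finset.prod_cons, Pi.mul_apply, Finset.prod_apply]
          ring
        have hmt : Measurable (∏ i ∈ t, fun ω => (U i ω) ^ c i) := by
          rw [show (∏ i ∈ t, fun ω => (U i ω) ^ c i) = fun ω => ∏ i ∈ t, (U i ω) ^ c i from
            funext fun ω => Finset.prod_apply ω t _]
          exact Finset.measurable_prod t fun i _ => hpm i
        rw [heq, hip.integral_mul_eq_mul_integral hmt.aestronglyMeasurable (hpm j).aestronglyMeasurable,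
          Finset.prod_cons,
          show integral μ (∏ i ∈ t, fun ω => (U i ω) ^ c i)
            = ∫ ω, ∏ i ∈ t, (U i ω) ^ c i ∂μ from congrArg (integral μ)
              (funext fun ω => Finset.prod_apply ω t _),
          iht]
        ring
  -- integrability
  have hint : ∀ c ∈ (Finset.univ : Finset (Fin m)).piAntidiag k,
      Integrable (fun ω => (Nat.multinomial Finset.univ c : ℝ) * ∏ i, (U i ω) ^ c i) μ := by
    intro c _
    apply Integrable.const_mul
    apply MeasureTheory.Integrable.mono' (integrable_const (1 : ℝ))
    · exact (Finset.measurable_prod _ fun i _ => (hmeas i).pow_const (c i)).aestronglyMeasurable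
    · filter_upwards [haeAll] with ω hω
      rw [Real.norm_eq_abs, abs_of_nonneg (Finset.prod_nonneg fun i _ =>
        pow_nonneg (hω i).1 _)]
      exact Finset.prod_le_one (fun i _ => pow_nonneg (hω i).1 _)
        (fun i _ => pow_le_one₀ (hω i).1 (hω i).2)
  -- expansion of the integral
  have hexp : ∫ ω, (∑ i, U i ω) ^ k ∂μ
      = ∑ c ∈ (Finset.univ : Finset (Fin m)).piAntidiag k,
          (Nat.multinomial Finset.univ c : ℝ) * ∏ i, (1 : ℝ) / ((c i : ℝ) + 1) := by
    calc ∫ ω, (∑ i, U i ω) ^ k ∂μ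
        = ∫ ω, ∑ c ∈ (Finset.univ : Finset (Fin m)).piAntidiag k,
            (Nat.multinomial Finset.univ c : ℝ) * ∏ i, (U i ω) ^ c i ∂μ := by
          congr 1
          funext ω
          exact Finset.sum_pow_eq_sum_piAntidiag Finset.univ (fun i => U i ω) k
      _ = ∑ c ∈ (Finset.univ : Finset (Fin m)).piAntidiag k,
            ∫ ω, (Nat.multinomial Finset.univ c : ℝ) * ∏ i, (U i ω) ^ c i ∂μ :=
          integral_finset_sum _ hint
      _ = ∑ c ∈ (Finset.univ : Finset (Fin m)).piAntidiag k,
            (Nat.multinomial Finset.univ c : ℝ) * ∏ i, (1 : ℝ) / ((c i : ℝ) + 1) := by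
          refine Finset.sum_congr rfl fun c _ => ?_
          rw [integral_const_mul, hprod c]
          exact congrArg _ (Finset.prod_congr rfl fun i _ => hmom i (c i))
  rw [hexp]
  -- per-term combinatorial rewriting
  have hper : ∀ c ∈ (Finset.univ : Finset (Fin m)).piAntidiag k,
      (Nat.multinomial Finset.univ c : ℝ) * ∏ i, (1 : ℝ) / ((c i : ℝ) + 1)
        = (k.factorial : ℝ) * ∏ i, (1 : ℝ) / ((c i + 1).factorial : ℝ) := by
    intro c hc
    obtain ⟨hcs, -⟩ := Finset.mem_piAntidiag.mp hc
    have hms : (∏ i, ((c i).factorial)) * Nat.multinomial Finset.univ c = k.factorial := by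
      rw [Nat.multinomial_spec, hcs]
    have hms' : (∏ i, ((c i).factorial : ℝ)) * (Nat.multinomial Finset.univ c : ℝ)
        = (k.factorial : ℝ) := by exact_mod_cast congrArg (Nat.cast (R := ℝ)) hms
    have h1 : ∀ i : Fin m, ((c i + 1).factorial : ℝ)
        = ((c i).factorial : ℝ) * ((c i : ℝ) + 1) := fun i => by
      rw [Nat.factorial_succ]; push_cast; ring
    rw [show (∏ i, (1 : ℝ) / ((c i : ℝ) + 1)) = 1 / ∏ i, ((c i : ℝ) + 1) by
        rw [Finset.prod_div_distrib, Finset.prod_const_one],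
      show (∏ i : Fin m, (1 : ℝ) / ((c i + 1).factorial : ℝ))
          = 1 / ∏ i, (((c i) + 1).factorial : ℝ) by
        rw [Finset.prod_div_distrib, Finset.prod_const_one],
      Finset.prod_congr rfl fun i _ => h1 i, Finset.prod_mul_distrib]
    have hp1 : (0 : ℝ) < ∏ i, ((c i).factorial : ℝ) :=
      Finset.prod_pos fun i _ => by positivity
    have hp2 : (0 : ℝ) < ∏ i, ((c i : ℝ) + 1) :=
      Finset.prod_pos fun i _ => by positivity
    field_simp
    linear_combination hms'
  rw [Finset.sum_congr rfl hper, ← Finset.mul_sum]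
  -- bridge with keyT
  have hT := keyT (Finset.univ : Finset (Fin m)) k
  simp only [Finset.card_univ, Fintype.card_fin] at hT
  rw [← hnk] at hT
  have hCh : (n.choose m : ℝ) * (m.factorial : ℝ) * (k.factorial : ℝ) = (n.factorial : ℝ) := by
    have h := Nat.choose_mul_factorial_mul_factorial hmn
    rw [hk]
    exact_mod_cast congrArg (Nat.cast (R := ℝ)) h
  apply mul_left_cancel₀ (show (n.factorial : ℝ) ≠ 0 by positivity)
  calc (n.factorial : ℝ) * (stirlingSnd n m : ℝ)
      = (n.choose m : ℝ) * (k.factorial : ℝ)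
        * ((m.factorial : ℝ) * (stirlingSnd n m : ℝ)) := by rw [← hCh]; ring
    _ = (n.choose m : ℝ) * (k.factorial : ℝ) * ((n.factorial : ℝ)
        * ∑ c ∈ (Finset.univ : Finset (Fin m)).piAntidiag k,
            ∏ i, (1 : ℝ) / ((c i + 1).factorial : ℝ)) := by rw [hT]
    _ = (n.factorial : ℝ) * ((n.choose m : ℝ) * ((k.factorial : ℝ)
        * ∑ c ∈ (Finset.univ : Finset (Fin m)).piAntidiag k,
            ∏ i, (1 : ℝ) / ((c i + 1).factorial : ℝ))) := by ring
end

section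
/- Let (c_n) be the Cauchy numbers and m ≥ 1, μ, n ≥ 0. Then ∑_{l_1+⋯+l_m=μ} multinomial(μ; l_1,…,l_m) ∑_{k_1+⋯+k_m=n} multinomial(n; k_1,…,k_m) c_{k_1+l_1}⋯c_{k_m+l_m} = ∫_0^m (θ)_{μ+n} ρ_m(θ) dθ, where ρ_m is the density of the sum of m independent uniform [0,1] random variables. -/
open Finset

/-- Falling factorial `(θ)_n = θ(θ-1)⋯(θ-n+1)`. -/
noncomputable def fallFac (θ : ℝ) (n : ℕ) : ℝ := ∏ i ∈ Finset.range n, (θ - i)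

/-- Cauchy numbers `c n = ∫_0^1 (θ)_n dθ`. -/
noncomputable def cauchy (n : ℕ) : ℝ := ∫ θ in (0:ℝ)..1, fallFac θ n

/-- The Irwin–Hall spline density on `[0,m]`. -/
noncomputable def rhoIH (m : ℕ) (θ : ℝ) : ℝ :=
  (1 / (m - 1).factorial : ℝ) *
    ∑ k ∈ Finset.range m, (m.choose k : ℝ) * (-1) ^ k * max (θ - k) 0 ^ (m - 1)


lemma fallFac_continuous (n : ℕ) : Continuous fun θ : ℝ => fallFac θ n := by
  unfold fallFac
  exact continuous_finset_prod _ fun i _ => continuous_id.sub continuous_const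

lemma fallFac_smeval (θ : ℝ) (n : ℕ) : fallFac θ n = (descPochhammer ℤ n).smeval θ := by
  induction n with
  | zero => simp [fallFac, descPochhammer, Polynomial.smeval_one]
  | succ n ih =>
    rw [descPochhammer_succ_right, Polynomial.smeval_mul]
    rw [fallFac, Finset.prod_range_succ, ← fallFac, ih]
    congr 1
    simp [Polynomial.smeval_sub, Polynomial.smeval_X, Polynomial.smeval_natCast]

lemma fallFac_add (x y : ℝ) (N : ℕ) :
    fallFac (x + y) N = ∑ k ∈ Finset.range (N+1),
      (N.choose k : ℝ) * fallFac x k * fallFac y (N - k) := by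
  simp only [fallFac_smeval]
  rw [Ring.descPochhammer_smeval_add _ (Commute.all x y),
    Finset.Nat.sum_antidiagonal_eq_sum_range_succ_mk]
  simp [mul_assoc]

lemma rhoIH_continuous (m : ℕ) : Continuous (rhoIH m) := by
  unfold rhoIH
  exact continuous_const.mul (continuous_finset_sum _ fun k _ =>
    continuous_const.mul (((continuous_id.sub continuous_const).max continuous_const).pow _))

lemma integral_fallFac_shift (θ : ℝ) (N : ℕ) :
    ∫ u in (0:ℝ)..1, fallFac (θ + u) N =
      ∑ k ∈ Finset.range (N+1), (N.choose k : ℝ) * cauchy k * fallFac θ (N - k) := by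
  have h : ∀ u : ℝ, fallFac (θ + u) N =
      ∑ k ∈ Finset.range (N+1), (N.choose k : ℝ) * fallFac u k * fallFac θ (N - k) := by
    intro u; rw [add_comm θ u, fallFac_add]
  simp only [h]
  rw [intervalIntegral.integral_finset_sum]
  · refine Finset.sum_congr rfl fun k _ => ?_
    rw [intervalIntegral.integral_mul_const, intervalIntegral.integral_const_mul, cauchy]
  · intro k _
    apply Continuous.intervalIntegrable
    exact (continuous_const.mul (fallFac_continuous k)).mul continuous_const

lemma findiff : ∀ m : ℕ, ∀ j ≤ m, ∀ x : ℝ,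
    ∑ k ∈ Finset.range (m+1), (-1:ℝ)^k * (m.choose k) * (x - k)^j
      = if j = m then (m.factorial : ℝ) else 0 := by
  intro m
  induction m with
  | zero => intro j hj x; interval_cases j; simp
  | succ m ih =>
    intro j hj x
    set f : ℕ → ℝ := fun k => (-1:ℝ)^k * ((m+1).choose k) * (x - k)^j with hf
    set g : ℕ → ℝ := fun k => (-1:ℝ)^k * (m.choose k) * (x - k)^j with hg
    set g' : ℕ → ℝ := fun k => (-1:ℝ)^k * (m.choose k) * ((x-1) - k)^j with hg'
    have key : ∑ k ∈ Finset.range (m+2), f k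
        = (∑ k ∈ Finset.range (m+1), g k) - ∑ k ∈ Finset.range (m+1), g' k := by
      have e1 : ∑ k ∈ Finset.range (m+2), f k
          = ∑ k ∈ Finset.range (m+1), f (k+1) + f 0 :=
        Finset.sum_range_succ' f (m+1)
      have e2 : ∀ k, f (k+1) = -(g' k) + (-1:ℝ)^(k+1) * (m.choose (k+1)) * (x - ((k+1:ℕ):ℝ))^j := by
        intro k
        have hc : (((m+1).choose (k+1) : ℕ) : ℝ) = (m.choose k : ℝ) + (m.choose (k+1) : ℝ) := by
          exact_mod_cast congrArg (Nat.cast (R := ℝ)) (Nat.choose_succ_succ m k)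
        simp only [hf, hg']
        rw [hc]
        push_cast
        ring
      have e3 : ∑ k ∈ Finset.range (m+1), (-1:ℝ)^(k+1) * (m.choose (k+1)) * (x - ((k+1:ℕ):ℝ))^j
          = (∑ k ∈ Finset.range (m+1), g k) - g 0 := by
        have h1 : ∑ k ∈ Finset.range (m+2), g k
            = ∑ k ∈ Finset.range (m+1), g (k+1) + g 0 := Finset.sum_range_succ' g (m+1)
        have h2 : ∑ k ∈ Finset.range (m+2), g k
            = ∑ k ∈ Finset.range (m+1), g k + g (m+1) := Finset.sum_range_succ g (m+1)
        have h3 : g (m+1) = 0 := by simp [hg, Nat.choose_succ_self]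
        have h4 : ∀ k, g (k+1) = (-1:ℝ)^(k+1) * (m.choose (k+1)) * (x - ((k+1:ℕ):ℝ))^j := by
          intro k; simp [hg]
        calc ∑ k ∈ Finset.range (m+1), (-1:ℝ)^(k+1) * (m.choose (k+1)) * (x - ((k+1:ℕ):ℝ))^j
            = ∑ k ∈ Finset.range (m+1), g (k+1) := by
              exact Finset.sum_congr rfl fun k _ => (h4 k).symm
          _ = ∑ k ∈ Finset.range (m+2), g k - g 0 := by rw [h1]; ring
          _ = (∑ k ∈ Finset.range (m+1), g k) - g 0 := by rw [h2, h3]; ring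
      have e0 : f 0 = g 0 := by simp [hf, hg]
      calc ∑ k ∈ Finset.range (m+2), f k
          = ∑ k ∈ Finset.range (m+1), f (k+1) + f 0 := e1
        _ = ∑ k ∈ Finset.range (m+1),
              (-(g' k) + (-1:ℝ)^(k+1) * (m.choose (k+1)) * (x - ((k+1:ℕ):ℝ))^j) + f 0 := by
              rw [Finset.sum_congr rfl fun k _ => e2 k]
        _ = (- ∑ k ∈ Finset.range (m+1), g' k)
              + (∑ k ∈ Finset.range (m+1), (-1:ℝ)^(k+1) * (m.choose (k+1)) * (x - ((k+1:ℕ):ℝ))^j)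
              + f 0 := by rw [Finset.sum_add_distrib, Finset.sum_neg_distrib]
        _ = _ := by rw [e3, e0]; ring
    have hgx : ∑ k ∈ Finset.range (m+1), g k
        = ∑ k ∈ Finset.range (m+1), (-1:ℝ)^k * (m.choose k) * (x - k)^j := rfl
    have hgx' : ∑ k ∈ Finset.range (m+1), g' k
        = ∑ k ∈ Finset.range (m+1), (-1:ℝ)^k * (m.choose k) * ((x-1) - k)^j := rfl
    rcases Nat.lt_or_ge j (m+1) with hj' | hj'
    · have hjm : j ≤ m := Nat.lt_succ_iff.mp hj'
      rw [key, hgx, hgx', ih j hjm x, ih j hjm (x-1)]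
      have : ¬ (j = m + 1) := by omega
      simp [this]
    · have hjj : j = m + 1 := le_antisymm hj hj'
      subst hjj
      rw [key, hgx, hgx']
      have expand : ∀ k : ℕ, (x - k)^(m+1) - ((x-1) - k)^(m+1)
          = ∑ i ∈ Finset.range (m+1), ((m+1).choose i : ℝ) * ((x-1) - k)^i := by
        intro k
        have hb : (x - k)^(m+1) = (((x-1) - k) + 1)^(m+1) := by ring_nf
        rw [hb, add_pow]
        rw [Finset.sum_range_succ]
        simp only [one_pow, mul_one, Nat.choose_self, Nat.cast_one,
          Nat.add_sub_cancel_left, Nat.sub_self, pow_zero]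
        rw [add_sub_cancel_right]
        refine Finset.sum_congr rfl fun i hi => ?_
        ring
      have step : (∑ k ∈ Finset.range (m+1), (-1:ℝ)^k * (m.choose k) * (x - k)^(m+1))
          - ∑ k ∈ Finset.range (m+1), (-1:ℝ)^k * (m.choose k) * ((x-1) - k)^(m+1)
          = ∑ k ∈ Finset.range (m+1), (-1:ℝ)^k * (m.choose k) *
              ∑ i ∈ Finset.range (m+1), ((m+1).choose i : ℝ) * ((x-1) - k)^i := by
        rw [← Finset.sum_sub_distrib]
        refine Finset.sum_congr rfl fun k _ => ?_
        rw [← expand]; ring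
      rw [step]
      have swap : ∑ k ∈ Finset.range (m+1), (-1:ℝ)^k * (m.choose k) *
            ∑ i ∈ Finset.range (m+1), ((m+1).choose i : ℝ) * ((x-1) - k)^i
          = ∑ i ∈ Finset.range (m+1), ((m+1).choose i : ℝ) *
            ∑ k ∈ Finset.range (m+1), (-1:ℝ)^k * (m.choose k) * ((x-1) - k)^i := by
        simp only [Finset.mul_sum]
        rw [Finset.sum_comm]
        refine Finset.sum_congr rfl fun i _ => Finset.sum_congr rfl fun k _ => by ring
      rw [swap]
      have : ∀ i ∈ Finset.range (m+1), ((m+1).choose i : ℝ) *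
            (∑ k ∈ Finset.range (m+1), (-1:ℝ)^k * (m.choose k) * ((x-1) - k)^i)
          = if i = m then ((m+1).choose m : ℝ) * (m.factorial : ℝ) else 0 := by
        intro i hi
        rw [ih i (Nat.lt_succ_iff.mp (Finset.mem_range.mp hi)) (x-1)]
        split_ifs with h
        · subst h; rfl
        · ring
      rw [Finset.sum_congr rfl this, Finset.sum_ite_eq' (Finset.range (m+1)) m]
      simp [Nat.choose_succ_self_right, Nat.factorial_succ]

lemma pascal_sum (m : ℕ) (J : ℕ → ℝ) :
    ∑ k ∈ Finset.range (m+1), ((m+1).choose k : ℝ) * (-1)^k * J k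
      = (∑ k ∈ Finset.range m, ((m.choose k : ℝ) * (-1)^k) * (J k - J (k+1)))
        + (-1)^m * J m := by
  set f : ℕ → ℝ := fun k => ((m+1).choose k : ℝ) * (-1)^k * J k with hf
  set g : ℕ → ℝ := fun k => ((m.choose k : ℝ)) * (-1)^k * J k with hg
  have e1 : ∑ k ∈ Finset.range (m+1), f k = ∑ k ∈ Finset.range m, f (k+1) + f 0 :=
    Finset.sum_range_succ' f m
  have e2 : ∀ k, f (k+1) = -((m.choose k : ℝ) * (-1)^k * J (k+1)) + g (k+1) := by
    intro k
    have hc : (((m+1).choose (k+1) : ℕ) : ℝ) = (m.choose k : ℝ) + (m.choose (k+1) : ℝ) := by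
      exact_mod_cast congrArg (Nat.cast (R := ℝ)) (Nat.choose_succ_succ m k)
    simp only [hf, hg, hc]
    push_cast
    ring
  have e3 : ∑ k ∈ Finset.range m, g (k+1)
      = ∑ k ∈ Finset.range m, g k + (-1)^m * J m - g 0 := by
    have h1 : ∑ k ∈ Finset.range (m+1), g k = ∑ k ∈ Finset.range m, g (k+1) + g 0 :=
      Finset.sum_range_succ' g m
    have h2 : ∑ k ∈ Finset.range (m+1), g k = ∑ k ∈ Finset.range m, g k + g m :=
      Finset.sum_range_succ g m
    have h3 : g m = (-1)^m * J m := by simp [hg]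
    rw [h3] at h2
    linarith [h1, h2]
  calc ∑ k ∈ Finset.range (m+1), f k
      = ∑ k ∈ Finset.range m, f (k+1) + f 0 := e1
    _ = ∑ k ∈ Finset.range m, (-((m.choose k : ℝ) * (-1)^k * J (k+1)) + g (k+1)) + f 0 := by
        rw [Finset.sum_congr rfl fun k _ => e2 k]
    _ = (∑ k ∈ Finset.range m, -((m.choose k : ℝ) * (-1)^k * J (k+1)))
          + (∑ k ∈ Finset.range m, g (k+1)) + f 0 := by
        rw [Finset.sum_add_distrib]
    _ = (∑ k ∈ Finset.range m, -((m.choose k : ℝ) * (-1)^k * J (k+1)))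
          + (∑ k ∈ Finset.range m, g k + (-1)^m * J m - g 0) + f 0 := by rw [e3]
    _ = ∑ k ∈ Finset.range m, (-((m.choose k : ℝ) * (-1)^k * J (k+1)) + g k)
          + (-1)^m * J m - g 0 + f 0 := by rw [Finset.sum_add_distrib]; ring
    _ = _ := by
        have hf0 : f 0 = g 0 := by simp [hf, hg]
        rw [hf0]
        have : ∀ k ∈ Finset.range m, (-((m.choose k : ℝ) * (-1)^k * J (k+1)) + g k)
            = ((m.choose k : ℝ) * (-1)^k) * (J k - J (k+1)) := by
          intro k _; simp only [hg]; ring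
        rw [Finset.sum_congr rfl this]; ring

lemma conv_step (m : ℕ) (hm : 1 ≤ m) (f : ℝ → ℝ) (hf : Continuous f) :
    ∫ θ in (0:ℝ)..((m:ℝ)+1), f θ * rhoIH (m+1) θ
      = ∫ θ in (0:ℝ)..(m:ℝ), (∫ u in (0:ℝ)..1, f (θ+u)) * rhoIH m θ := by
  have hm0 : (0:ℝ) < m := by exact_mod_cast hm
  have hmR : ((m:ℝ)) ≠ 0 := ne_of_gt hm0
  -- the primitive of f
  set F : ℝ → ℝ := fun x => ∫ t in (0:ℝ)..x, f t with hFdef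
  have hF : ∀ x : ℝ, HasDerivAt F (f x) x := fun x =>
    intervalIntegral.integral_hasDerivAt_right (hf.intervalIntegrable _ _)
      (hf.stronglyMeasurableAtFilter _ _) hf.continuousAt
  have hFcont : Continuous F :=
    continuous_iff_continuousAt.mpr fun x => (hF x).continuousAt
  set h : ℝ → ℝ := fun θ => F (θ+1) - F θ with hhdef
  have hh : ∀ θ : ℝ, (∫ u in (0:ℝ)..1, f (θ+u)) = h θ := by
    intro θ
    rw [intervalIntegral.integral_comp_add_left f θ]
    rw [add_zero]
    rw [← intervalIntegral.integral_interval_sub_left (hf.intervalIntegrable _ _)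
      (hf.intervalIntegrable _ _)]
  have hhcont : Continuous h := (hFcont.comp (continuous_id.add continuous_const)).sub hFcont
  set J : ℕ → ℝ := fun k => ∫ θ in (k:ℝ)..((m:ℝ)+1), f θ * (θ - k)^m with hJdef
  set T : ℕ → ℝ := fun k => ∫ θ in (m:ℝ)..((m:ℝ)+1), f θ * (θ - k)^m with hTdef
  set Fsm : ℝ := ∫ t in (m:ℝ)..((m:ℝ)+1), f t with hFsmdef
  set I : ℕ → ℝ := fun k => ∫ θ in (k:ℝ)..(m:ℝ), h θ * (θ - k)^(m-1) with hIdef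
  -- Step 1
  have step1 : ∫ θ in (0:ℝ)..((m:ℝ)+1), f θ * rhoIH (m+1) θ
      = (1/(m.factorial:ℝ)) * ∑ k ∈ Finset.range (m+1), ((m+1).choose k : ℝ) * (-1)^k * J k := by
    have hint : ∀ θ : ℝ, f θ * rhoIH (m+1) θ = ∑ k ∈ Finset.range (m+1),
        (1/(m.factorial:ℝ)) * (((m+1).choose k : ℝ) * (-1)^k) * (f θ * max (θ - k) 0 ^ m) := by
      intro θ
      rw [rhoIH]
      simp only [Nat.add_sub_cancel]
      rw [Finset.mul_sum, Finset.mul_sum]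
      exact Finset.sum_congr rfl fun k _ => by ring
    simp only [hint]
    rw [intervalIntegral.integral_finset_sum
      (f := fun k (θ:ℝ) => (1/(m.factorial:ℝ)) * (((m+1).choose k : ℝ) * (-1)^k)
        * (f θ * max (θ - (k:ℝ)) 0 ^ m))
      (fun k _ => ((continuous_const.mul (hf.mul
        (((continuous_id.sub continuous_const).max continuous_const).pow m))).intervalIntegrable _ _))]
    rw [Finset.mul_sum]
    refine Finset.sum_congr rfl fun k hk => ?_
    have hk' : (k:ℝ) ≤ m := by
      have := Finset.mem_range.mp hk
      exact_mod_cast Nat.lt_succ_iff.mp this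
    rw [intervalIntegral.integral_const_mul]
    have hcont : Continuous fun θ:ℝ => f θ * max (θ - (k:ℝ)) 0 ^ m :=
      hf.mul (((continuous_id.sub continuous_const).max continuous_const).pow m)
    have hsplit := intervalIntegral.integral_add_adjacent_intervals
      (a := (0:ℝ)) (b := (k:ℝ)) (c := (m:ℝ)+1) (μ := MeasureTheory.volume)
      (hcont.intervalIntegrable _ _) (hcont.intervalIntegrable _ _)
    have h1 : (∫ θ in (0:ℝ)..(k:ℝ), f θ * max (θ - (k:ℝ)) 0 ^ m) = 0 := by
      have heq : Set.EqOn (fun θ:ℝ => f θ * max (θ - (k:ℝ)) 0 ^ m) (fun _ => (0:ℝ))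
          (Set.uIcc 0 (k:ℝ)) := by
        intro θ hθ
        rw [Set.uIcc_of_le (by positivity : (0:ℝ) ≤ (k:ℝ))] at hθ
        have hmax : max (θ - (k:ℝ)) 0 = 0 := max_eq_right (by linarith [hθ.2])
        simp [hmax, zero_pow (by omega : m ≠ 0)]
      rw [intervalIntegral.integral_congr heq, intervalIntegral.integral_zero]
    have h2 : (∫ θ in (k:ℝ)..((m:ℝ)+1), f θ * max (θ - (k:ℝ)) 0 ^ m) = J k := by
      apply intervalIntegral.integral_congr
      intro θ hθ
      rw [Set.uIcc_of_le (by linarith : (k:ℝ) ≤ (m:ℝ)+1)] at hθ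
      have hmax : max (θ - (k:ℝ)) 0 = θ - k := max_eq_left (by linarith [hθ.1])
      simp [hmax]
    have : (∫ θ in (0:ℝ)..((m:ℝ)+1), f θ * max (θ - (k:ℝ)) 0 ^ m) = J k := by
      rw [← hsplit, h1, h2, zero_add]
    rw [this]
    ring
  -- Step 2
  have step2 : ∫ θ in (0:ℝ)..(m:ℝ), (∫ u in (0:ℝ)..1, f (θ+u)) * rhoIH m θ
      = (1/((m-1).factorial:ℝ)) * ∑ k ∈ Finset.range m, ((m.choose k : ℝ) * (-1)^k) * I k := by
    have hint : ∀ θ : ℝ, (∫ u in (0:ℝ)..1, f (θ+u)) * rhoIH m θ = ∑ k ∈ Finset.range m,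
        (1/((m-1).factorial:ℝ)) * (((m.choose k : ℝ)) * (-1)^k) * (h θ * max (θ - k) 0 ^ (m-1)) := by
      intro θ
      rw [hh θ, rhoIH, Finset.mul_sum, Finset.mul_sum]
      exact Finset.sum_congr rfl fun k _ => by ring
    simp only [hint]
    rw [intervalIntegral.integral_finset_sum
      (f := fun k (θ:ℝ) => (1/((m-1).factorial:ℝ)) * (((m.choose k : ℝ)) * (-1)^k)
        * (h θ * max (θ - (k:ℝ)) 0 ^ (m-1)))
      (fun k _ => ((continuous_const.mul (hhcont.mul
        (((continuous_id.sub continuous_const).max continuous_const).pow (m-1)))).intervalIntegrable _ _))]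
    rw [Finset.mul_sum]
    refine Finset.sum_congr rfl fun k hk => ?_
    have hkm : k < m := Finset.mem_range.mp hk
    have hk' : (k:ℝ) ≤ m := by exact_mod_cast le_of_lt hkm
    rw [intervalIntegral.integral_const_mul]
    have hcont : Continuous fun θ:ℝ => h θ * max (θ - (k:ℝ)) 0 ^ (m-1) :=
      hhcont.mul (((continuous_id.sub continuous_const).max continuous_const).pow (m-1))
    have hsplit := intervalIntegral.integral_add_adjacent_intervals
      (a := (0:ℝ)) (b := (k:ℝ)) (c := (m:ℝ)) (μ := MeasureTheory.volume)
      (hcont.intervalIntegrable _ _) (hcont.intervalIntegrable _ _)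
    have h1 : (∫ θ in (0:ℝ)..(k:ℝ), h θ * max (θ - (k:ℝ)) 0 ^ (m-1)) = 0 := by
      rcases Nat.eq_zero_or_pos k with hk0 | hk0
      · subst hk0
        simp
      · have heq : Set.EqOn (fun θ:ℝ => h θ * max (θ - (k:ℝ)) 0 ^ (m-1)) (fun _ => (0:ℝ))
            (Set.uIcc 0 (k:ℝ)) := by
          intro θ hθ
          rw [Set.uIcc_of_le (by positivity : (0:ℝ) ≤ (k:ℝ))] at hθ
          have hmax : max (θ - (k:ℝ)) 0 = 0 := max_eq_right (by linarith [hθ.2])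
          have : m - 1 ≠ 0 := by omega
          simp [hmax, zero_pow this]
        rw [intervalIntegral.integral_congr heq, intervalIntegral.integral_zero]
    have h2 : (∫ θ in (k:ℝ)..(m:ℝ), h θ * max (θ - (k:ℝ)) 0 ^ (m-1)) = I k := by
      apply intervalIntegral.integral_congr
      intro θ hθ
      rw [Set.uIcc_of_le hk'] at hθ
      have hmax : max (θ - (k:ℝ)) 0 = θ - k := max_eq_left (by linarith [hθ.1])
      simp [hmax]
    have : (∫ θ in (0:ℝ)..(m:ℝ), h θ * max (θ - (k:ℝ)) 0 ^ (m-1)) = I k := by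
      rw [← hsplit, h1, h2, zero_add]
    rw [this]
    ring
  -- Step 3: integration by parts per k
  have step3 : ∀ k, k < m → I k = Fsm * ((m:ℝ)-k)^m / m - (1/(m:ℝ)) * (J (k+1) - J k + T k) := by
    intro k hkm
    have hk' : (k:ℝ) ≤ m := by exact_mod_cast le_of_lt hkm
    -- by parts
    have hu : ∀ x ∈ Set.uIcc (k:ℝ) (m:ℝ), HasDerivAt h (f (x+1) - f x) x := by
      intro x _
      have h1 : HasDerivAt (fun θ:ℝ => F (θ+1)) (f (x+1)) x := by
        have := (hF (x+1)).comp x ((hasDerivAt_id x).add_const 1)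
        simp at this
        exact this
      exact h1.sub (hF x)
    have hv : ∀ x ∈ Set.uIcc (k:ℝ) (m:ℝ),
        HasDerivAt (fun θ:ℝ => (θ - k)^m / m) ((x - k)^(m-1)) x := by
      intro x _
      have h1 : HasDerivAt (fun θ:ℝ => (θ - k)^m) ((m:ℝ) * (x - k)^(m-1)) x := by
        have := (HasDerivAt.fun_pow ((hasDerivAt_id x).sub_const (k:ℝ)) m)
        simpa using this
      have h2 := h1.div_const (m:ℝ)
      have : (m:ℝ) * (x - k)^(m-1) / m = (x - k)^(m-1) := by
        field_simp
      rwa [this] at h2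
    have hbp := intervalIntegral.integral_mul_deriv_eq_deriv_mul hu hv
      (((hf.comp (continuous_id.add continuous_const)).sub hf).intervalIntegrable _ _)
      (((continuous_id.sub continuous_const).pow (m-1)).intervalIntegrable _ _)
    -- hbp : ∫ k..m, h x * (x-k)^(m-1) = h m * ((m-k)^m/m) - h k * ((k-k)^m/m) - ∫ k..m (f(x+1)-f x) * ((x-k)^m/m)
    have hIeq : I k = h (m:ℝ) * (((m:ℝ) - k)^m / m) - h k * (((k:ℝ) - k)^m / m)
        - ∫ x in (k:ℝ)..(m:ℝ), (f (x+1) - f x) * ((x - k)^m / m) := hbp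
    have hzero : h (k:ℝ) * (((k:ℝ) - k)^m / m) = 0 := by
      rw [sub_self, zero_pow (by omega : m ≠ 0)]
      simp
    have hhm : h (m:ℝ) = Fsm := by
      simp only [hhdef, hFdef, hFsmdef]
      rw [intervalIntegral.integral_interval_sub_left (hf.intervalIntegrable _ _)
        (hf.intervalIntegrable _ _)]
    -- the remaining integral
    have hrem : (∫ x in (k:ℝ)..(m:ℝ), (f (x+1) - f x) * ((x - k)^m / m))
        = (1/(m:ℝ)) * (J (k+1) - (J k - T k)) := by
      have hsplit : ∀ x : ℝ, (f (x+1) - f x) * ((x - (k:ℝ))^m / m)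
          = (1/(m:ℝ)) * (f (x+1) * (x - k)^m) - (1/(m:ℝ)) * (f x * (x - k)^m) := by
        intro x; field_simp
      simp only [hsplit]
      rw [intervalIntegral.integral_sub
        (f := fun x:ℝ => (1/(m:ℝ)) * (f (x+1) * (x - (k:ℝ))^m))
        (g := fun x:ℝ => (1/(m:ℝ)) * (f x * (x - (k:ℝ))^m))
        ((continuous_const.mul ((hf.comp (continuous_id.add continuous_const)).mul
          ((continuous_id.sub continuous_const).pow m))).intervalIntegrable _ _)
        ((continuous_const.mul (hf.mul
          ((continuous_id.sub continuous_const).pow m))).intervalIntegrable _ _)]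
      rw [intervalIntegral.integral_const_mul, intervalIntegral.integral_const_mul]
      have hshift : (∫ x in (k:ℝ)..(m:ℝ), f (x+1) * (x - k)^m) = J (k+1) := by
        have := intervalIntegral.integral_comp_add_right (a := (k:ℝ)) (b := (m:ℝ))
          (fun t => f t * (t - ((k:ℝ)+1))^m) 1
        -- ∫ x in k..m, f (x+1) * ((x+1) - (k+1))^m = ∫ t in k+1..m+1, ...
        have heq : ∀ x : ℝ, f (x+1) * (x - (k:ℝ))^m = f (x+1) * ((x+1) - ((k:ℝ)+1))^m := by
          intro x; ring_nf
        simp only [heq]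
        rw [this]
        simp only [hJdef]
        push_cast
        apply intervalIntegral.integral_congr
        intro x _
        ring_nf
      have htail : (∫ x in (k:ℝ)..(m:ℝ), f x * (x - (k:ℝ))^m) = J k - T k := by
        have hc : Continuous fun x:ℝ => f x * (x - (k:ℝ))^m :=
          hf.mul ((continuous_id.sub continuous_const).pow m)
        have := intervalIntegral.integral_add_adjacent_intervals
          (a := (k:ℝ)) (b := (m:ℝ)) (c := (m:ℝ)+1) (μ := MeasureTheory.volume)
          (hc.intervalIntegrable _ _) (hc.intervalIntegrable _ _)
        simp only [hJdef, hTdef]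
        linarith [this]
      rw [hshift, htail]
      ring
    rw [hIeq, hzero, hhm, hrem]
    ring
  -- Step 4: assemble
  rw [step1, step2]
  set c : ℕ → ℝ := fun k => (m.choose k : ℝ) * (-1)^k with hcdef
  set S1 : ℝ := ∑ k ∈ Finset.range (m+1), ((m+1).choose k : ℝ) * (-1)^k * J k with hS1def
  -- fact (a)
  have hA : ∑ k ∈ Finset.range m, c k * ((m:ℝ)-k)^m = (m.factorial : ℝ) := by
    have hfd := findiff m m le_rfl (m:ℝ)
    rw [if_pos rfl] at hfd
    have hlast : (-1:ℝ)^m * (m.choose m : ℝ) * ((m:ℝ) - m)^m = 0 := by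
      rw [sub_self, zero_pow (by omega : m ≠ 0)]
      ring
    rw [Finset.sum_range_succ, hlast, add_zero] at hfd
    rw [← hfd]
    exact Finset.sum_congr rfl fun k _ => by simp only [hcdef]; ring
  -- fact (b)
  have hB : ∑ k ∈ Finset.range m, c k * (J k - J (k+1)) = S1 - (-1)^m * J m := by
    have := pascal_sum m J
    rw [← hS1def] at this
    rw [this]
    ring
  -- fact (c)
  have hC : ∑ k ∈ Finset.range m, c k * T k = (m.factorial : ℝ) * Fsm - (-1)^m * J m := by
    have hfull : ∑ k ∈ Finset.range (m+1), c k * T k = (m.factorial : ℝ) * Fsm := by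
      have heach : ∀ k ∈ Finset.range (m+1), c k * T k
          = ∫ θ in (m:ℝ)..((m:ℝ)+1), c k * (f θ * (θ - k)^m) := by
        intro k _
        rw [intervalIntegral.integral_const_mul]
      rw [Finset.sum_congr rfl heach]
      rw [← intervalIntegral.integral_finset_sum
        (f := fun k (θ:ℝ) => c k * (f θ * (θ - (k:ℝ))^m))
        (fun k _ => ((continuous_const.mul (hf.mul
          ((continuous_id.sub continuous_const).pow m))).intervalIntegrable _ _))]
      have hpt : ∀ θ : ℝ, ∑ k ∈ Finset.range (m+1), c k * (f θ * (θ - k)^m)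
          = f θ * (m.factorial : ℝ) := by
        intro θ
        have hfd := findiff m m le_rfl θ
        rw [if_pos rfl] at hfd
        calc ∑ k ∈ Finset.range (m+1), c k * (f θ * (θ - k)^m)
            = f θ * ∑ k ∈ Finset.range (m+1), (-1:ℝ)^k * (m.choose k : ℝ) * (θ - k)^m := by
              rw [Finset.mul_sum]
              exact Finset.sum_congr rfl fun k _ => by simp only [hcdef]; ring
          _ = f θ * (m.factorial : ℝ) := by rw [hfd]
      simp only [hpt]
      rw [intervalIntegral.integral_mul_const]
      simp only [hFsmdef]
      ring
    have hlast : c m * T m = (-1)^m * J m := by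
      have : T m = J m := by simp only [hTdef, hJdef]
      rw [this]
      simp [hcdef]
    rw [Finset.sum_range_succ, hlast] at hfull
    linarith [hfull]
  -- combine
  have hIsum : ∑ k ∈ Finset.range m, c k * I k = (1/(m:ℝ)) * S1 := by
    have heach : ∀ k ∈ Finset.range m, c k * I k
        = (Fsm/(m:ℝ)) * (c k * ((m:ℝ)-k)^m) + (1/(m:ℝ)) * (c k * (J k - J (k+1)))
          - (1/(m:ℝ)) * (c k * T k) := by
      intro k hk
      rw [step3 k (Finset.mem_range.mp hk)]
      ring
    rw [Finset.sum_congr rfl heach]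
    rw [Finset.sum_sub_distrib, Finset.sum_add_distrib, ← Finset.mul_sum, ← Finset.mul_sum,
      ← Finset.mul_sum]
    rw [hA, hB, hC]
    field_simp
    ring
  rw [hIsum]
  have hfac : (m:ℝ) * ((m-1).factorial : ℝ) = (m.factorial : ℝ) := by
    exact_mod_cast congrArg (Nat.cast (R := ℝ)) (Nat.mul_factorial_pred (by omega))
  rw [← hfac]
  have hfacne : (((m-1).factorial : ℕ) : ℝ) ≠ 0 := by positivity
  field_simp

lemma multinomial_fin_cons (m a : ℕ) (x : Fin m → ℕ) :
    Nat.multinomial Finset.univ (Fin.cons a x : Fin (m+1) → ℕ)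
      = (a + ∑ i, x i).choose a * Nat.multinomial Finset.univ x := by
  have h1 := Nat.multinomial_spec (Finset.univ : Finset (Fin (m+1))) (Fin.cons a x)
  have h2 := Nat.multinomial_spec (Finset.univ : Finset (Fin m)) x
  have hprod : ∏ i : Fin (m+1), ((Fin.cons a x : Fin (m+1) → ℕ) i).factorial
      = a.factorial * ∏ i : Fin m, (x i).factorial := by
    rw [Fin.prod_univ_succ]
    simp
  have hsum : ∑ i : Fin (m+1), (Fin.cons a x : Fin (m+1) → ℕ) i = a + ∑ i, x i := by
    rw [Fin.sum_univ_succ]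
    simp
  rw [hprod, hsum] at h1
  have hchoose : (a + ∑ i, x i).choose a * a.factorial * (∑ i, x i).factorial
      = (a + ∑ i, x i).factorial := by
    have := Nat.choose_mul_factorial_mul_factorial (Nat.le_add_right a (∑ i, x i))
    simpa using this
  have key : (a.factorial * ∏ i : Fin m, (x i).factorial) *
      Nat.multinomial Finset.univ (Fin.cons a x : Fin (m+1) → ℕ)
      = (a.factorial * ∏ i : Fin m, (x i).factorial) *
        ((a + ∑ i, x i).choose a * Nat.multinomial Finset.univ x) := by
    rw [h1]
    calc (a + ∑ i, x i).factorial
        = (a + ∑ i, x i).choose a * a.factorial * (∑ i, x i).factorial := hchoose.symm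
      _ = (a + ∑ i, x i).choose a * a.factorial *
            ((∏ i : Fin m, (x i).factorial) * Nat.multinomial Finset.univ x) := by rw [h2]
      _ = _ := by ring
  have hpos : 0 < a.factorial * ∏ i : Fin m, (x i).factorial :=
    Nat.mul_pos a.factorial_pos (Finset.prod_pos fun i _ => (x i).factorial_pos)
  exact Nat.eq_of_mul_eq_mul_left hpos key

lemma sum_antidiagonalTuple_succ {M : Type*} [AddCommMonoid M] (m n : ℕ)
    (f : (Fin (m+1) → ℕ) → M) :
    ∑ x ∈ Finset.Nat.antidiagonalTuple (m+1) n, f x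
      = ∑ p ∈ Finset.HasAntidiagonal.antidiagonal n, ∑ x ∈ Finset.Nat.antidiagonalTuple m p.2,
          f (Fin.cons p.1 x) := by
  rw [Finset.sum_sigma']
  refine Finset.sum_nbij' (i := fun y => (⟨(y 0, ∑ i, y (Fin.succ i)), Fin.tail y⟩ :
      (_ : ℕ × ℕ) × (Fin m → ℕ)))
    (j := fun a => Fin.cons a.1.1 a.2) ?_ ?_ ?_ ?_ ?_
  · intro y hy
    rw [Finset.Nat.mem_antidiagonalTuple] at hy
    rw [Finset.mem_sigma]
    constructor
    · rw [Finset.HasAntidiagonal.mem_antidiagonal]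
      rw [← hy, Fin.sum_univ_succ]
    · rw [Finset.Nat.mem_antidiagonalTuple]
      rfl
  · rintro ⟨p, x⟩ ha
    rw [Finset.mem_sigma] at ha
    rw [Finset.Nat.mem_antidiagonalTuple, Fin.sum_cons]
    rw [Finset.Nat.mem_antidiagonalTuple.mp ha.2]
    exact Finset.HasAntidiagonal.mem_antidiagonal.mp ha.1
  · intro y hy
    exact Fin.cons_self_tail y
  · rintro ⟨p, x⟩ ha
    rw [Finset.mem_sigma] at ha
    have h2 : ∑ i, (Fin.cons p.1 x : Fin (m+1) → ℕ) (Fin.succ i) = p.2 := by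
      simpa using Finset.Nat.mem_antidiagonalTuple.mp ha.2
    have h0 : (Fin.cons p.1 x : Fin (m+1) → ℕ) 0 = p.1 := rfl
    have ht : Fin.tail (Fin.cons p.1 x : Fin (m+1) → ℕ) = x := Fin.tail_cons _ _
    refine Sigma.ext ?_ ?_
    · have hx : ∑ i, x i = p.2 := Finset.Nat.mem_antidiagonalTuple.mp ha.2
      simp [h0, h2, hx]
    · simp [ht]
  · intro y hy
    rw [Fin.cons_self_tail]

lemma g_succ (m : ℕ) (hm : 1 ≤ m) (N : ℕ) :
    ∫ θ in (0:ℝ)..((m:ℝ)+1), fallFac θ N * rhoIH (m+1) θ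
      = ∑ j ∈ Finset.range (N+1), (N.choose j : ℝ) * cauchy j *
          ∫ θ in (0:ℝ)..(m:ℝ), fallFac θ (N-j) * rhoIH m θ := by
  rw [conv_step m hm _ (fallFac_continuous N)]
  have hpt : ∀ θ:ℝ, (∫ u in (0:ℝ)..1, fallFac (θ+u) N) * rhoIH m θ
      = ∑ j ∈ Finset.range (N+1),
          ((N.choose j:ℝ) * cauchy j) * (fallFac θ (N-j) * rhoIH m θ) := by
    intro θ
    rw [integral_fallFac_shift, Finset.sum_mul]
    exact Finset.sum_congr rfl fun j _ => by ring
  simp only [hpt]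
  rw [intervalIntegral.integral_finset_sum
    (f := fun j (θ:ℝ) => ((N.choose j:ℝ) * cauchy j) * (fallFac θ (N-j) * rhoIH m θ))
    (fun j _ => ((continuous_const.mul
      ((fallFac_continuous (N-j)).mul (rhoIH_continuous m))).intervalIntegrable _ _))]
  refine Finset.sum_congr rfl fun j _ => ?_
  rw [intervalIntegral.integral_const_mul]

lemma double_antidiag_eq (μ n : ℕ) (c : ℕ → ℝ) (G : ℕ → ℝ) :
    ∑ p ∈ Finset.HasAntidiagonal.antidiagonal μ, ∑ q ∈ Finset.HasAntidiagonal.antidiagonal n,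
        (μ.choose p.1 : ℝ) * (n.choose q.1 : ℝ) * c (q.1 + p.1) * G (p.2 + q.2)
      = ∑ j ∈ Finset.range (μ+n+1), ((μ+n).choose j : ℝ) * c j * G (μ+n-j) := by
  set N := μ + n with hN
  set F : ℕ × ℕ → ℝ := fun ab =>
    (μ.choose ab.1 : ℝ) * (n.choose ab.2 : ℝ) * c (ab.2 + ab.1) * G ((μ - ab.1) + (n - ab.2))
    with hF
  have hS : ∀ ab : ℕ × ℕ, N < ab.1 + ab.2 → F ab = 0 := by
    intro ab hab
    have : μ < ab.1 ∨ n < ab.2 := by omega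
    rcases this with h | h
    · simp [hF, Nat.choose_eq_zero_of_lt h]
    · simp [hF, Nat.choose_eq_zero_of_lt h]
  -- LHS as a double range sum
  have lhs_eq : ∑ p ∈ Finset.HasAntidiagonal.antidiagonal μ, ∑ q ∈ Finset.HasAntidiagonal.antidiagonal n,
      (μ.choose p.1 : ℝ) * (n.choose q.1 : ℝ) * c (q.1 + p.1) * G (p.2 + q.2)
      = ∑ a ∈ Finset.range (μ+1), ∑ b ∈ Finset.range (n+1), F (a, b) := by
    rw [Finset.Nat.sum_antidiagonal_eq_sum_range_succ_mk]
    refine Finset.sum_congr rfl fun a _ => ?_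
    rw [Finset.Nat.sum_antidiagonal_eq_sum_range_succ_mk]
  -- extend ranges
  have ext1 : ∀ a : ℕ, ∑ b ∈ Finset.range (n+1), F (a, b)
      = ∑ b ∈ Finset.range (N+1), F (a, b) := by
    intro a
    apply Finset.sum_subset
    · intro b hb
      rw [Finset.mem_range] at hb ⊢
      omega
    · intro b _ hb
      rw [Finset.mem_range] at hb
      have : n < b := by omega
      simp [hF, Nat.choose_eq_zero_of_lt this]
  have ext2 : ∑ a ∈ Finset.range (μ+1), ∑ b ∈ Finset.range (N+1), F (a, b)
      = ∑ a ∈ Finset.range (N+1), ∑ b ∈ Finset.range (N+1), F (a, b) := by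
    apply Finset.sum_subset
    · intro a ha
      rw [Finset.mem_range] at ha ⊢
      omega
    · intro a _ ha
      rw [Finset.mem_range] at ha
      have : μ < a := by omega
      apply Finset.sum_eq_zero
      intro b _
      simp [hF, Nat.choose_eq_zero_of_lt this]
  -- RHS as sum over antidiagonals
  have rhs_eq : ∑ j ∈ Finset.range (N+1), ((N).choose j : ℝ) * c j * G (N-j)
      = ∑ j ∈ Finset.range (N+1), ∑ ab ∈ Finset.HasAntidiagonal.antidiagonal j, F ab := by
    refine Finset.sum_congr rfl fun j hj => ?_
    rw [Finset.mem_range] at hj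
    have hcast : ((N.choose j : ℕ) : ℝ) = ∑ ab ∈ Finset.HasAntidiagonal.antidiagonal j,
        (μ.choose ab.1 : ℝ) * (n.choose ab.2 : ℝ) := by
      rw [hN, Nat.add_choose_eq]
      push_cast
      rfl
    rw [hcast, Finset.sum_mul, Finset.sum_mul]
    refine Finset.sum_congr rfl fun ab hab => ?_
    have habj : ab.1 + ab.2 = j := Finset.HasAntidiagonal.mem_antidiagonal.mp hab
    rcases le_or_gt ab.1 μ with h1 | h1
    · rcases le_or_gt ab.2 n with h2 | h2
      · have e1 : c j = c (ab.2 + ab.1) := by rw [← habj, Nat.add_comm]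
        have e2 : G (N - j) = G ((μ - ab.1) + (n - ab.2)) := by
          congr 1
          omega
        rw [e1, e2]
      · simp [hF, Nat.choose_eq_zero_of_lt h2]
    · simp [hF, Nat.choose_eq_zero_of_lt h1]
  -- biUnion of antidiagonals
  have hdisj : (↑(Finset.range (N+1)) : Set ℕ).PairwiseDisjoint Finset.HasAntidiagonal.antidiagonal := by
    intro j1 _ j2 _ hne
    simp only [Function.onFun]
    rw [Finset.disjoint_left]
    intro ab h1 h2
    exact hne ((Finset.HasAntidiagonal.mem_antidiagonal.mp h1).symm.trans (Finset.HasAntidiagonal.mem_antidiagonal.mp h2))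
  have hbi : ∑ j ∈ Finset.range (N+1), ∑ ab ∈ Finset.HasAntidiagonal.antidiagonal j, F ab
      = ∑ ab ∈ (Finset.range (N+1)).biUnion Finset.HasAntidiagonal.antidiagonal, F ab :=
    (Finset.sum_biUnion hdisj).symm
  have hsub : (Finset.range (N+1)).biUnion Finset.HasAntidiagonal.antidiagonal
      ⊆ Finset.range (N+1) ×ˢ Finset.range (N+1) := by
    intro ab hab
    rw [Finset.mem_biUnion] at hab
    obtain ⟨j, hj, habj⟩ := hab
    rw [Finset.mem_range] at hj
    have := Finset.HasAntidiagonal.mem_antidiagonal.mp habj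
    rw [Finset.mem_product, Finset.mem_range, Finset.mem_range]
    omega
  have hprod : ∑ ab ∈ (Finset.range (N+1)).biUnion Finset.HasAntidiagonal.antidiagonal, F ab
      = ∑ ab ∈ Finset.range (N+1) ×ˢ Finset.range (N+1), F ab := by
    apply Finset.sum_subset hsub
    intro ab hab hnot
    rw [Finset.mem_product, Finset.mem_range, Finset.mem_range] at hab
    rcases le_or_gt (ab.1 + ab.2) N with hle | hlt
    · exfalso
      apply hnot
      rw [Finset.mem_biUnion]
      exact ⟨ab.1 + ab.2, Finset.mem_range.mpr (by omega), Finset.HasAntidiagonal.mem_antidiagonal.mpr rfl⟩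
    · exact hS ab hlt
  calc ∑ p ∈ Finset.HasAntidiagonal.antidiagonal μ, ∑ q ∈ Finset.HasAntidiagonal.antidiagonal n,
        (μ.choose p.1 : ℝ) * (n.choose q.1 : ℝ) * c (q.1 + p.1) * G (p.2 + q.2)
      = ∑ a ∈ Finset.range (μ+1), ∑ b ∈ Finset.range (n+1), F (a, b) := lhs_eq
    _ = ∑ a ∈ Finset.range (μ+1), ∑ b ∈ Finset.range (N+1), F (a, b) :=
        Finset.sum_congr rfl fun a _ => ext1 a
    _ = ∑ a ∈ Finset.range (N+1), ∑ b ∈ Finset.range (N+1), F (a, b) := ext2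
    _ = ∑ ab ∈ Finset.range (N+1) ×ˢ Finset.range (N+1), F ab := by
        rw [Finset.sum_product]
    _ = ∑ ab ∈ (Finset.range (N+1)).biUnion Finset.HasAntidiagonal.antidiagonal, F ab := hprod.symm
    _ = ∑ j ∈ Finset.range (N+1), ∑ ab ∈ Finset.HasAntidiagonal.antidiagonal j, F ab := hbi.symm
    _ = ∑ j ∈ Finset.range (N+1), ((N).choose j : ℝ) * c j * G (N-j) := rhs_eq.symm

theorem cauchy_convolution_eq_integral (m : ℕ) (hm : 1 ≤ m) (μ n : ℕ) :
    ∑ l ∈ Finset.Nat.antidiagonalTuple m μ,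
        (Nat.multinomial Finset.univ l : ℝ) *
          ∑ k ∈ Finset.Nat.antidiagonalTuple m n,
            (Nat.multinomial Finset.univ k : ℝ) * ∏ i, cauchy (k i + l i) =
      ∫ θ in (0:ℝ)..m, fallFac θ (μ + n) * rhoIH m θ := by
  induction m, hm using Nat.le_induction generalizing μ n with
  | base =>
    simp only [Finset.Nat.antidiagonalTuple_one, Finset.sum_singleton]
    have hmul : ∀ r : ℕ, Nat.multinomial (Finset.univ : Finset (Fin 1)) ![r] = 1 := by
      intro r
      rw [Finset.univ_unique, Nat.multinomial_singleton]
    rw [hmul μ, hmul n]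
    have hprod : (∏ i : Fin 1, cauchy ((![n] : Fin 1 → ℕ) i + (![μ] : Fin 1 → ℕ) i))
        = cauchy (n + μ) := by
      rw [Fin.prod_univ_one]
      rfl
    rw [hprod]
    have hrho : ∀ θ : ℝ, fallFac θ (μ + n) * rhoIH 1 θ = fallFac θ (μ + n) := by
      intro θ
      simp [rhoIH]
    simp only [hrho]
    rw [Nat.cast_one, one_mul, one_mul, add_comm n μ]
    rfl
  | succ m hm ih =>
    have hcast : (((m+1:ℕ)):ℝ) = (m:ℝ)+1 := by push_cast; ring
    rw [hcast, g_succ m hm (μ+n)]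
    set G : ℕ → ℝ := fun r => ∫ θ in (0:ℝ)..(m:ℝ), fallFac θ r * rhoIH m θ with hG
    rw [← double_antidiag_eq μ n cauchy G]
    -- now prove the LHS equals the double antidiagonal sum
    rw [sum_antidiagonalTuple_succ]
    simp only [sum_antidiagonalTuple_succ]
    refine Finset.sum_congr rfl fun p hp => ?_
    have hp' : p.1 + p.2 = μ := Finset.HasAntidiagonal.mem_antidiagonal.mp hp
    -- reduce each l'-term, then swap sums
    have inner1 : ∀ l' ∈ Finset.Nat.antidiagonalTuple m p.2,
        (Nat.multinomial Finset.univ (Fin.cons p.1 l' : Fin (m+1) → ℕ) : ℝ) *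
          (∑ q ∈ Finset.HasAntidiagonal.antidiagonal n, ∑ k' ∈ Finset.Nat.antidiagonalTuple m q.2,
            (Nat.multinomial Finset.univ (Fin.cons q.1 k' : Fin (m+1) → ℕ) : ℝ) *
              ∏ i, cauchy ((Fin.cons q.1 k' : Fin (m+1) → ℕ) i
                + (Fin.cons p.1 l' : Fin (m+1) → ℕ) i))
        = ∑ q ∈ Finset.HasAntidiagonal.antidiagonal n, ∑ k' ∈ Finset.Nat.antidiagonalTuple m q.2,
            (μ.choose p.1 : ℝ) * (n.choose q.1 : ℝ) * cauchy (q.1 + p.1) *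
              ((Nat.multinomial Finset.univ l' : ℝ) *
                ((Nat.multinomial Finset.univ k' : ℝ) * ∏ i, cauchy (k' i + l' i))) := by
      intro l' hl'
      have hl'' : ∑ i, l' i = p.2 := Finset.Nat.mem_antidiagonalTuple.mp hl'
      have hml : (Nat.multinomial Finset.univ (Fin.cons p.1 l' : Fin (m+1) → ℕ) : ℝ)
          = (μ.choose p.1 : ℝ) * (Nat.multinomial Finset.univ l' : ℝ) := by
        rw [multinomial_fin_cons, hl'', hp']
        push_cast
        ring
      rw [Finset.mul_sum]
      refine Finset.sum_congr rfl fun q hq => ?_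
      have hq' : q.1 + q.2 = n := Finset.HasAntidiagonal.mem_antidiagonal.mp hq
      rw [Finset.mul_sum]
      refine Finset.sum_congr rfl fun k' hk' => ?_
      have hk'' : ∑ i, k' i = q.2 := Finset.Nat.mem_antidiagonalTuple.mp hk'
      have hmk : (Nat.multinomial Finset.univ (Fin.cons q.1 k' : Fin (m+1) → ℕ) : ℝ)
          = (n.choose q.1 : ℝ) * (Nat.multinomial Finset.univ k' : ℝ) := by
        rw [multinomial_fin_cons, hk'', hq']
        push_cast
        ring
      have hprod : (∏ i, cauchy ((Fin.cons q.1 k' : Fin (m+1) → ℕ) i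
            + (Fin.cons p.1 l' : Fin (m+1) → ℕ) i))
          = cauchy (q.1 + p.1) * ∏ i, cauchy (k' i + l' i) := by
        rw [Fin.prod_univ_succ]
        congr 1
      rw [hml, hmk, hprod]
      ring
    rw [Finset.sum_congr rfl inner1]
    rw [Finset.sum_comm]
    refine Finset.sum_congr rfl fun q hq => ?_
    simp only [hG]
    rw [← ih p.2 q.2, Finset.mul_sum]
    refine Finset.sum_congr rfl fun l' _ => ?_
    rw [Finset.mul_sum, Finset.mul_sum]
end
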